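/- Let $J, K \subseteq S$ in $S_n$ with $x \in X_J^{-1} \cap X_K$. If $i$ and $i+1$ both lie in $x^{-1}\mathcal{J}_q \cap \mathcal{K}_m$ for some connected components $\mathcal{J}_q$ of the graph of $J$ and $\mathcal{K}_m$ of the graph of $K$, then $(x(i), x(i+1))$ is an edge of $\mathcal{J}$, i.e. $x(i+1) = x(i)+1$ and $(x(i), x(i)+1) \in J$; hence $(i,i+1)$ is an edge of the graph $x^{-1}\mathcal{J} \cap \mathcal{K}$. -/

import Mathlib

open Equiv Pointwise

/-- The copy of `Sₙ` inside `Equiv.Perm ℕ`: permutations fixing every point `≥ n`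
(we use points `0,…,n-1` instead of `1,…,n`). -/
def symN (n : ℕ) : Subgroup (Equiv.Perm ℕ) where
  carrier := {x | ∀ i, n ≤ i → x i = i}
  one_mem' := fun _ _ => rfl
  mul_mem' := by
    intro a b ha hb i hi
    simp only [Set.mem_setOf_eq] at *
    simp [Equiv.Perm.mul_apply, hb i hi, ha i hi]
  inv_mem' := by
    intro a ha i hi
    simp only [Set.mem_setOf_eq] at *
    conv_lhs => rw [← ha i hi]
    simp

/-- The number of inversions (the Coxeter length in `Sₙ`). -/
def invNum (n : ℕ) (x : Equiv.Perm ℕ) : ℕ :=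
  ((Finset.range n ×ˢ Finset.range n).filter
    (fun p => p.1 < p.2 ∧ x p.2 < x p.1)).card

/-- The adjacent transpositions `(k, k+1)` for `k ∈ J`. -/
def gens (J : Set ℕ) : Set (Equiv.Perm ℕ) := (fun k => Equiv.swap k (k + 1)) '' J

/-- The parabolic subgroup `W_J`. -/
def parabolic (J : Set ℕ) : Subgroup (Equiv.Perm ℕ) := Subgroup.closure (gens J)

/-- `x ∈ X_J`: a minimal length left coset representative of `W_J` in `Sₙ`. -/
def isMinLeft (n : ℕ) (J : Set ℕ) (x : Equiv.Perm ℕ) : Prop :=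
  x ∈ symN n ∧ ∀ w ∈ parabolic J, invNum n x ≤ invNum n (x * w)

/-- `x ∈ X_J⁻¹`: a minimal length right coset representative of `W_J` in `Sₙ`. -/
def isMinRight (n : ℕ) (J : Set ℕ) (x : Equiv.Perm ℕ) : Prop :=
  x ∈ symN n ∧ ∀ w ∈ parabolic J, invNum n x ≤ invNum n (w * x)

/-- `i1` and `j1` lie in the same connected component of the graph `𝒥` with
edges `(k, k+1)` for `k ∈ J`. -/
def sameComp (J : Set ℕ) (i j : ℕ) : Prop :=
  ∀ t, min i j ≤ t → t < max i j → t ∈ J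

/-- The vertex set of the connected component of the graph of `J` containing `a`. -/
def comp (J : Set ℕ) (a : ℕ) : Set ℕ := {b | sameComp J a b}

/-- `c` is a composition of `n`. -/
def isComposition (n : ℕ) (c : List ℕ) : Prop := c.sum = n ∧ ∀ k ∈ c, 0 < k

/-- The `q`-th consecutive block determined by a composition `c`. -/
def blockSet (c : List ℕ) (q : ℕ) : Set ℕ := Set.Ico ((c.take q).sum) ((c.take (q + 1)).sum)

/-- The set of adjacent transpositions corresponding to a composition `c`:
those `(i, i+1)` with `i, i+1` in the same block. -/
def edgesOf (c : List ℕ) : Set ℕ := {i | ∃ q, i ∈ blockSet c q ∧ i + 1 ∈ blockSet c q}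

/-- `i` indexes an edge `(i, i+1)` of the image graph `x⁻¹𝒥`, i.e. `(x i, x (i+1))`
is an edge of `𝒥` (as an unordered pair). -/
def imgEdges (x : Equiv.Perm ℕ) (J : Set ℕ) : Set ℕ :=
  {i | ∃ t ∈ J, (x i = t ∧ x (i + 1) = t + 1) ∨ (x i = t + 1 ∧ x (i + 1) = t)}


private lemma swap_lt_of_lt {k a b : ℕ} (hab : a < b) (hne : ¬(a = k ∧ b = k + 1)) :
    Equiv.swap k (k + 1) a < Equiv.swap k (k + 1) b := by
  simp only [Equiv.swap_apply_def]
  split_ifs <;> omega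

private lemma lt_of_swap_lt {k a b : ℕ} (h : Equiv.swap k (k + 1) a < Equiv.swap k (k + 1) b) :
    a < b ∨ (a = k + 1 ∧ b = k) := by
  simp only [Equiv.swap_apply_def] at h
  split_ifs at h <;> omega

private lemma swap_lt_n {k n a : ℕ} (hk : k + 1 < n) (ha : a < n) :
    Equiv.swap k (k + 1) a < n := by
  simp only [Equiv.swap_apply_def]
  split_ifs <;> omega

private lemma swap_mem_parabolic {J : Set ℕ} {k : ℕ} (hk : k ∈ J) :
    Equiv.swap k (k + 1) ∈ parabolic J :=
  Subgroup.subset_closure ⟨k, hk, rfl⟩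

private lemma inv_lt_of_symN {n : ℕ} {x : Equiv.Perm ℕ} (hx : x ∈ symN n) {m : ℕ}
    (hm : m < n) : x⁻¹ m < n := by
  by_contra h
  push_neg at h
  have h2 := hx _ h
  rw [show ∀ y, x (x⁻¹ y) = y from x.apply_symm_apply] at h2
  omega

private lemma invA (n k : ℕ) (hk : k + 1 < n) (x : Equiv.Perm ℕ) (h : x (k + 1) < x k) :
    invNum n (x * Equiv.swap k (k + 1)) < invNum n x := by
  unfold invNum
  set σ := Equiv.swap k (k + 1) with hσ
  set B := (Finset.range n ×ˢ Finset.range n).filter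
    (fun p => p.1 < p.2 ∧ x p.2 < x p.1) with hB
  have hmem : (k, k + 1) ∈ B := by
    simp only [hB, Finset.mem_filter, Finset.mem_product, Finset.mem_range]
    exact ⟨⟨by omega, hk⟩, by omega, h⟩
  have h1 : ((Finset.range n ×ˢ Finset.range n).filter
      (fun p => p.1 < p.2 ∧ (x * σ) p.2 < (x * σ) p.1)).card ≤
      (B.erase (k, k + 1)).card := by
    apply Finset.card_le_card_of_injOn (fun p => (σ p.1, σ p.2))
    · intro p hp
      rw [Finset.mem_coe, Finset.mem_filter] at hp
      simp only [Finset.mem_filter, Finset.mem_product, Finset.mem_range,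
        Equiv.Perm.mul_apply] at hp
      obtain ⟨⟨hp1, hp2⟩, hplt, hpx⟩ := hp
      have hpne : ¬(p.1 = k ∧ p.2 = k + 1) := by
        rintro ⟨e1, e2⟩
        rw [e1, e2] at hpx
        rw [hσ] at hpx
        simp [Equiv.swap_apply_left, Equiv.swap_apply_right] at hpx
        omega
      have hlt : σ p.1 < σ p.2 := swap_lt_of_lt hplt hpne
      rw [Finset.mem_coe, Finset.mem_erase]
      constructor
      · intro he
        rw [Prod.ext_iff] at he
        obtain ⟨e1, e2⟩ := he
        rw [hσ] at e1 e2
        simp only [Equiv.swap_apply_def] at e1 e2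
        split_ifs at e1 e2 <;> omega
      · simp only [hB, Finset.mem_filter, Finset.mem_product, Finset.mem_range]
        exact ⟨⟨swap_lt_n hk hp1, swap_lt_n hk hp2⟩, hlt, hpx⟩
    · intro p hp q hq hpq
      have e1 : σ p.1 = σ q.1 := congrArg Prod.fst hpq
      have e2 : σ p.2 = σ q.2 := congrArg Prod.snd hpq
      exact Prod.ext (σ.injective e1) (σ.injective e2)
  have h2 : (B.erase (k, k + 1)).card < B.card := Finset.card_erase_lt_of_mem hmem
  omega

private lemma invB (n v : ℕ) (hv : v + 1 < n) (x : Equiv.Perm ℕ) (hxs : x ∈ symN n)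
    (h : x⁻¹ (v + 1) < x⁻¹ v) :
    invNum n (Equiv.swap v (v + 1) * x) < invNum n x := by
  unfold invNum
  set σ := Equiv.swap v (v + 1) with hσ
  apply Finset.card_lt_card
  constructor
  · intro p hp
    rw [Finset.mem_filter] at hp ⊢
    simp only [Finset.mem_filter, Finset.mem_product, Finset.mem_range,
      Equiv.Perm.mul_apply] at hp ⊢
    obtain ⟨⟨hp1, hp2⟩, hplt, hpx⟩ := hp
    refine ⟨⟨hp1, hp2⟩, hplt, ?_⟩
    rcases lt_of_swap_lt hpx with h' | ⟨e2, e1⟩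
    · exact h'
    · exfalso
      have a1 : p.2 = x⁻¹ (v + 1) := by rw [← e2]; simp
      have a2 : p.1 = x⁻¹ v := by rw [← e1]; simp
      omega
  · intro hsub
    have hmem : (x⁻¹ (v + 1), x⁻¹ v) ∈ (Finset.range n ×ˢ Finset.range n).filter
        (fun p => p.1 < p.2 ∧ x p.2 < x p.1) := by
      simp only [Finset.mem_filter, Finset.mem_product, Finset.mem_range]
      refine ⟨⟨inv_lt_of_symN hxs (by omega), inv_lt_of_symN hxs (by omega)⟩, h, ?_⟩
      simp
    have := hsub hmem
    rw [Finset.mem_filter] at this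
    simp only [Finset.mem_filter, Finset.mem_product, Finset.mem_range,
      Equiv.Perm.mul_apply, show ∀ y, x (x⁻¹ y) = y from x.apply_symm_apply] at this
    obtain ⟨-, -, hbad⟩ := this
    rw [hσ] at hbad
    simp [Equiv.swap_apply_left, Equiv.swap_apply_right] at hbad

/-- let `x ∈ X_J⁻¹ ∩ X_K`.  If `i` and `i+1` lie in the same
`x⁻¹𝒥_q ∩ 𝒦ₘ` (i.e. `x i` and `x (i+1)` lie in the same component of the graph
of `J`, and `i`, `i+1` in the same component of the graph of `K`), then
`(x i, x (i+1))` is an edge of `𝒥`: `x (i+1) = x i + 1` and `x i ∈ J`; hence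
`(i, i+1)` is an edge of `x⁻¹𝒥 ∩ 𝒦`. -/
theorem stmt5 (n : ℕ) (J K : Set ℕ)
    (hJ : ∀ k ∈ J, k + 1 < n) (hK : ∀ k ∈ K, k + 1 < n)
    (x : Equiv.Perm ℕ) (hx : isMinRight n J x ∧ isMinLeft n K x)
    (i : ℕ) (hJc : sameComp J (x i) (x (i + 1)))
    (hKc : sameComp K i (i + 1)) :
    x (i + 1) = x i + 1 ∧ x i ∈ J ∧ i ∈ imgEdges x J ∩ K := by
  obtain ⟨⟨hxs, hR⟩, ⟨-, hL⟩⟩ := hx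
  have hK_lt : ∀ k ∈ K, x k < x (k + 1) := by
    intro k hk
    by_contra hc
    push_neg at hc
    have hne : x k ≠ x (k + 1) := fun e => by have := x.injective e; omega
    have h2 : x (k + 1) < x k := by omega
    have h3 := hL (Equiv.swap k (k + 1)) (swap_mem_parabolic hk)
    have h4 := invA n k (hK k hk) x h2
    omega
  have hJ_lt : ∀ v ∈ J, x⁻¹ v < x⁻¹ (v + 1) := by
    intro v hv
    by_contra hc
    push_neg at hc
    have hne : x⁻¹ v ≠ x⁻¹ (v + 1) := fun e => by have := x⁻¹.injective e; omega
    have h2 : x⁻¹ (v + 1) < x⁻¹ v := by omega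
    have h3 := hR (Equiv.swap v (v + 1)) (swap_mem_parabolic hv)
    have h4 := invB n v (hJ v hv) x hxs h2
    omega
  have hiK : i ∈ K := hKc i (by omega) (by omega)
  have hxi_lt : x i < x (i + 1) := hK_lt i hiK
  have hJc' : ∀ v, x i ≤ v → v < x (i + 1) → v ∈ J := by
    intro v h1 h2
    exact hJc v (by omega) (by omega)
  have hxiJ : x i ∈ J := hJc' (x i) le_rfl hxi_lt
  have key : ∀ d, x i + 1 + d ≤ x (i + 1) → i + 1 + d ≤ x⁻¹ (x i + 1 + d) := by
    intro d
    induction d with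
    | zero =>
      intro _
      have e0 : x i + 1 + 0 = x i + 1 := rfl
      rw [e0]
      have h0 := hJ_lt (x i) hxiJ
      rw [show ∀ y, x⁻¹ (x y) = y from x.symm_apply_apply] at h0
      omega
    | succ d ih =>
      intro hd
      have h1 := ih (by omega)
      have h2 := hJ_lt (x i + 1 + d) (hJc' _ (by omega) (by omega))
      have e : x i + 1 + d + 1 = x i + 1 + (d + 1) := rfl
      rw [e] at h2
      omega
  have hle := key (x (i + 1) - (x i + 1)) (by omega)
  have e : x i + 1 + (x (i + 1) - (x i + 1)) = x (i + 1) := by omega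
  rw [e, show ∀ y, x⁻¹ (x y) = y from x.symm_apply_apply] at hle
  have heq : x (i + 1) = x i + 1 := by omega
  exact ⟨heq, hxiJ, ⟨x i, hxiJ, Or.inl ⟨rfl, heq⟩⟩, hiK⟩
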